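/- Let E = EuclideanSpace ℝ (Fin p), let K be a positive natural number, c : Fin K → E class centers, and k : Fin K. Define B_k : E → ℝ by B_k(x) = ‖x − (1/K) Σ_l (Function.update c k x) l‖², i.e., the k-th between-class term ‖c_k − c̄‖² viewed as a function of the k-th class center, where the global center c̄ = (1/K) Σ_l c l also depends on that center. Then B_k is differentiable at c k and its gradient at c k equals (2 · (1 − 1/K)) • (c k − (1/K) Σ_l c l). -/

import Mathlib

open scoped BigOperators

/-- The gradient of the `k`-th between-class term `‖c_k − c̄‖²`, viewed as a
function of the `k`-th class center (through which the global center `c̄` also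
varies), is `2(1 − 1/K)(c_k − (1/K) Σ_l c_l)`. -/
theorem gradient_between_class_term_wrt_center
    {p K : ℕ} (hK : 0 < K)
    (c : Fin K → EuclideanSpace ℝ (Fin p))
    (k : Fin K) :
    HasGradientAt
      (fun x : EuclideanSpace ℝ (Fin p) =>
        ‖x - (K : ℝ)⁻¹ • ∑ l : Fin K, (Function.update c k x) l‖ ^ 2)
      ((2 * (1 - 1 / (K : ℝ))) • (c k - (K : ℝ)⁻¹ • ∑ l : Fin K, c l))
      (c k) := by
  classical
  let E := EuclideanSpace ℝ (Fin p)
  set a : ℝ := 1 - (K : ℝ)⁻¹ with ha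
  set T : E := ∑ l ∈ Finset.univ.erase k, c l with hT
  have hsum : ∀ x : E, ∑ l : Fin K, (Function.update c k x) l = x + T := by
    intro x
    rw [hT, ← Finset.add_sum_erase _ _ (Finset.mem_univ k), Function.update_self]
    congr 1
    exact Finset.sum_congr rfl fun l hl =>
      Function.update_of_ne (Finset.ne_of_mem_erase hl) x c
  have hfun : (fun x : E => ‖x - (K : ℝ)⁻¹ • ∑ l : Fin K, (Function.update c k x) l‖ ^ 2)
      = fun x : E => ‖a • x - (K : ℝ)⁻¹ • T‖ ^ 2 := by
    funext x
    rw [hsum x, smul_add, ha, sub_smul, one_smul]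
    ring_nf
    abel_nf
    rw [sub_add_eq_sub_sub]
  rw [hfun]
  -- derivative of the affine map
  have hf : HasFDerivAt (fun x : E => a • x - (K : ℝ)⁻¹ • T)
      (a • (ContinuousLinearMap.id ℝ E)) (c k) :=
    ((hasFDerivAt_id (c k)).const_smul a).sub_const _
  have := hf.norm_sq
  rw [hasFDerivAt_iff_hasGradientAt] at this
  convert this using 1
  apply (InnerProductSpace.toDual ℝ E).injective
  rw [LinearIsometryEquiv.apply_symm_apply]
  ext y
  have hck : a • c k - (K : ℝ)⁻¹ • T = c k - (K : ℝ)⁻¹ • ∑ l : Fin K, c l := by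
    rw [ha, sub_smul, one_smul, ← Finset.add_sum_erase _ _ (Finset.mem_univ k), ← hT,
      smul_add]
    abel
  simp only [InnerProductSpace.toDual_apply_apply, ContinuousLinearMap.smul_apply,
    ContinuousLinearMap.comp_apply, innerSL_apply_apply, ContinuousLinearMap.coe_smul',
    Pi.smul_apply, ContinuousLinearMap.id_apply, hck]
  rw [real_inner_smul_left, real_inner_smul_right]
  simp [real_inner_smul_left]
  ring_nf
  rw [ha]
  ring
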